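/- Let k be a field and R a commutative k-algebra which is an integral domain of finite type over k with more than one maximal ideal. Then the R⊗_k R-module Hom_{R⊗_k R}(D, R ⊗_k R) is zero, where D is R with the S = R⊗_k R action (r⊗r')•x = rr'x. -/

import Mathlib

open TensorProduct

section Aux

variable {k R : Type*} [Field k] [CommRing R] [Algebra k R]

/-- Contraction of the right tensor factor by a functional. -/
noncomputable def ctr (l : R →ₗ[k] k) : R ⊗[k] R →ₗ[k] R :=
  (TensorProduct.rid k R).toLinearMap ∘ₗ LinearMap.lTensor R l

@[simp] lemma ctr_tmul (l : R →ₗ[k] k) (x y : R) : ctr l (x ⊗ₜ[k] y) = l y • x := by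
  simp [ctr]

lemma ctr_left_mul (l : R →ₗ[k] k) (a : R) (z : R ⊗[k] R) :
    ctr l ((a ⊗ₜ[k] (1 : R)) * z) = a * ctr l z := by
  induction z using TensorProduct.induction_on with
  | zero => simp
  | tmul x y => simp [Algebra.TensorProduct.tmul_mul_tmul, mul_smul_comm]
  | add x y hx hy => simp [mul_add, hx, hy]

lemma ctr_right_mul (l : R →ₗ[k] k) (a : R) (z : R ⊗[k] R) :
    ctr l (((1 : R) ⊗ₜ[k] a) * z) = ctr (l ∘ₗ LinearMap.mulLeft k a) z := by
  induction z using TensorProduct.induction_on with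
  | zero => simp
  | tmul x y => simp [Algebra.TensorProduct.tmul_mul_tmul]
  | add x y hx hy => rw [mul_add, map_add, hx, hy, map_add]

/-- If all right contractions of `z` vanish, then `z = 0`. -/
lemma eq_zero_of_ctr (z : R ⊗[k] R) (h : ∀ l : R →ₗ[k] k, ctr l z = 0) : z = 0 := by
  classical
  let b : Module.Basis _ k R := Module.Basis.ofVectorSpace k R
  let e := Module.Basis.tensorProduct b b
  rw [← (e.repr.map_eq_zero_iff)]
  ext ij
  obtain ⟨i, j⟩ := ij
  have key : (b.coord i) ∘ₗ (ctr (b.coord j)) = e.coord (i, j) := by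
    apply TensorProduct.ext'
    intro x y
    simp [e, Module.Basis.coord_apply, Module.Basis.tensorProduct_repr_tmul_apply, smul_eq_mul, mul_comm]
  have := congrArg (b.coord i) (h (b.coord j))
  rw [← LinearMap.comp_apply, key] at this
  simpa [Module.Basis.coord_apply] using this

/-- Key lemma: if `R` is a domain which is not finite dimensional over `k`, then any element
of `R ⊗[k] R` annihilated by all `a ⊗ 1 - 1 ⊗ a` is zero. -/
lemma key_lemma [IsDomain R] (hfin : ¬ FiniteDimensional k R) (z : R ⊗[k] R)
    (hz : ∀ a : R, (a ⊗ₜ[k] (1 : R)) * z = ((1 : R) ⊗ₜ[k] a) * z) : z = 0 := by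
  classical
  by_contra hz0
  -- find a functional whose contraction of z is nonzero
  have hex : ∃ l : R →ₗ[k] k, ctr l z ≠ 0 := by
    by_contra h
    push_neg at h
    exact hz0 (eq_zero_of_ctr z h)
  obtain ⟨l₀, hw⟩ := hex
  set w := ctr l₀ z with hwdef
  -- finite set representation of z
  obtain ⟨T, hT⟩ := TensorProduct.exists_finset z
  set X : Submodule k R := Submodule.span k ((T.image Prod.fst : Finset R) : Set R) with hX
  have hXfin : FiniteDimensional k X := FiniteDimensional.span_finset k _
  -- all contractions of z lie in X
  have hmem : ∀ l : R →ₗ[k] k, ctr l z ∈ X := by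
    intro l
    rw [hT, map_sum]
    apply Submodule.sum_mem
    intro p hp
    rw [ctr_tmul]
    exact Submodule.smul_mem _ _ (Submodule.subset_span
      (by simp only [Finset.coe_image, Set.mem_image, Finset.mem_coe]; exact ⟨p, hp, rfl⟩))
  -- the map a ↦ w * a is injective with range in X
  have hrange : ∀ a : R, w * a ∈ X := by
    intro a
    have : w * a = ctr (l₀ ∘ₗ LinearMap.mulLeft k a) z := by
      rw [← ctr_right_mul, ← hz, ctr_left_mul, hwdef, mul_comm]
    rw [this]
    exact hmem _
  let f : R →ₗ[k] X := (LinearMap.mulLeft k w).codRestrict X hrange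
  have hfinj : Function.Injective f := by
    intro a b hab
    have : w * a = w * b := congrArg Subtype.val hab
    exact mul_left_cancel₀ hw this
  exact hfin (FiniteDimensional.of_injective f hfinj)

end Aux

/-- If `R` is an integral domain of finite type over a field `k` with more than
one maximal ideal, then `Hom_{R⊗R}(D, R⊗R) = 0`, where `D` is `R` with the
`(r ⊗ r') • x = r * r' * x` action of `S = R ⊗_k R`. -/
theorem stmt15 (k : Type*) [Field k] (R : Type*) [CommRing R] [Algebra k R]
    [IsDomain R] [Algebra.FiniteType k R]
    (m n : Ideal R) (hm : m.IsMaximal) (hn : n.IsMaximal) (hmn : m ≠ n) :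
    letI : Module (R ⊗[k] R) R :=
      Module.compHom R (Algebra.TensorProduct.lmul' k (S := R)).toRingHom
    ∀ g : R →ₗ[R ⊗[k] R] (R ⊗[k] R), g = 0 := by
  letI : Module (R ⊗[k] R) R :=
    Module.compHom R (Algebra.TensorProduct.lmul' k (S := R)).toRingHom
  intro g
  -- R is not finite dimensional over k, else it would be a field with a unique maximal ideal
  have hfin : ¬ FiniteDimensional k R := by
    intro hFD
    have hInt : Algebra.IsIntegral k R := Algebra.IsIntegral.of_finite k R
    have hinj : Function.Injective (algebraMap k R) := (algebraMap k R).injective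
    have hF : IsField R := (hInt.isField_iff_isField hinj).mp (Field.toIsField k)
    letI := hF.toField
    rcases m.eq_bot_or_top with h | h
    · rcases n.eq_bot_or_top with h' | h'
      · exact hmn (h.trans h'.symm)
      · exact hn.ne_top h'
    · exact hm.ne_top h
  apply LinearMap.ext
  intro x
  have hsmul : ∀ (s : R ⊗[k] R) (y : R),
      s • y = Algebra.TensorProduct.lmul' k (S := R) s * y := fun _ _ => rfl
  have hz : ∀ a : R, (a ⊗ₜ[k] (1 : R)) * g x = ((1 : R) ⊗ₜ[k] a) * g x := by
    intro a
    have h1 : (a ⊗ₜ[k] (1 : R)) * g x = g ((a ⊗ₜ[k] (1 : R)) • x) := by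
      rw [map_smul, smul_eq_mul]
    have h2 : ((1 : R) ⊗ₜ[k] a) * g x = g (((1 : R) ⊗ₜ[k] a) • x) := by
      rw [map_smul, smul_eq_mul]
    rw [h1, h2, hsmul, hsmul]
    simp [Algebra.TensorProduct.lmul'_apply_tmul]
  rw [LinearMap.zero_apply]
  exact key_lemma hfin (g x) hz
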